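/- (Theorem 4.3, rigorous small-ε form.) Let m be a positive natural number, let μ be the uniform probability measure on the cube [-1,1]^m in ℝ^m, and let f : ℝ^m → ℝ be continuous and (Fréchet) differentiable at x ∈ ℝ^m with nonzero gradient g = ∇f(x). Define ρ_rand(ε) = ∫ (f(x+ε·δ) - f(x))^2 dμ(δ) and ρ_adv(ε) = sup_{‖δ‖_∞ ≤ 1} (f(x+ε·δ) - f(x))^2. Then the ratio ρ_adv(ε)/ρ_rand(ε) tends to 3·‖g‖_1^2/‖g‖_2^2 as ε → 0 from the right, and this limit L satisfies 3 ≤ L ≤ 3·‖g‖_0, where ‖g‖_0 is the number of nonzero coordinates of g. -/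

import Mathlib

open MeasureTheory Filter

lemma int1d_id : ∫ t in Set.Icc (-1:ℝ) 1, t = 0 := by
  rw [MeasureTheory.integral_Icc_eq_integral_Ioc,
    ← intervalIntegral.integral_of_le (by norm_num : (-1:ℝ) ≤ 1)]
  simp [integral_id]

lemma int1d_sq : ∫ t in Set.Icc (-1:ℝ) 1, t^2 = 2/3 := by
  rw [MeasureTheory.integral_Icc_eq_integral_Ioc,
    ← intervalIntegral.integral_of_le (by norm_num : (-1:ℝ) ≤ 1)]
  simp [integral_pow]; norm_num

lemma int1d_one : ∫ t in Set.Icc (-1:ℝ) 1, (1:ℝ) = 2 := by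
  simp [Real.volume_Icc]; norm_num

lemma cube_eq_Icc (m : ℕ) :
    {δ : Fin m → ℝ | ∀ i, -1 ≤ δ i ∧ δ i ≤ 1} =
      Set.Icc (fun _ => (-1:ℝ)) (fun _ => (1:ℝ)) := by
  ext δ; simp [Set.mem_Icc, Pi.le_def, forall_and]

lemma moment (m : ℕ) (hm : 0 < m) (i j : Fin m) :
    ∫ δ in {δ : Fin m → ℝ | ∀ k, -1 ≤ δ k ∧ δ k ≤ 1}, δ i * δ j =
      if i = j then (2:ℝ)^m / 3 else 0 := by
  classical
  set P : Fin m → ℝ → ℝ := fun k t =>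
    if k = i then (if j = i then t^2 else t) else if k = j then t else 1 with hP
  set F : Fin m → ℝ → ℝ := fun k => (Set.Icc (-1:ℝ) 1).indicator (P k) with hF
  have hmeas : MeasurableSet {δ : Fin m → ℝ | ∀ k, -1 ≤ δ k ∧ δ k ≤ 1} := by
    rw [cube_eq_Icc]; exact measurableSet_Icc
  have hfun : ∀ δ : Fin m → ℝ,
      {δ : Fin m → ℝ | ∀ k, -1 ≤ δ k ∧ δ k ≤ 1}.indicator (fun δ => δ i * δ j) δ
        = ∏ k, F k (δ k) := by
    intro δ
    by_cases h : ∀ k, -1 ≤ δ k ∧ δ k ≤ 1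
    · have hmem : δ ∈ {δ : Fin m → ℝ | ∀ k, -1 ≤ δ k ∧ δ k ≤ 1} := h
      rw [Set.indicator_of_mem hmem]
      have h2 : ∀ k, F k (δ k) = P k (δ k) := fun k =>
        Set.indicator_of_mem (Set.mem_Icc.mpr ⟨(h k).1, (h k).2⟩) _
      simp only [h2]
      by_cases hij : j = i
      · subst hij
        have hpk : ∀ k, P k (δ k) = if k = j then (δ k)^2 else 1 := fun k => by
          by_cases hk : k = j <;> simp [hP, hk]
        rw [Finset.prod_congr rfl (fun k _ => hpk k),
          Finset.prod_ite_eq' Finset.univ j (fun k => (δ k)^2)]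
        simp [sq]
      · rw [← Finset.prod_subset (Finset.subset_univ {i, j})
          (by intro k _ hk
              simp only [Finset.mem_insert, Finset.mem_singleton, not_or] at hk
              simp [hP, hk.1, hk.2])]
        rw [Finset.prod_pair (fun h => hij h.symm)]
        simp [hP, hij]
    · obtain ⟨k, hk⟩ := not_forall.mp h
      have hnm : δ ∉ {δ : Fin m → ℝ | ∀ k, -1 ≤ δ k ∧ δ k ≤ 1} := by
        intro hc; simp only [Set.mem_setOf_eq] at hc; exact hk (hc k)
      rw [Set.indicator_of_notMem hnm]
      refine (Finset.prod_eq_zero (Finset.mem_univ k) ?_).symm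
      rw [hF]
      simp only []
      rw [Set.indicator_of_notMem (by rw [Set.mem_Icc]; exact hk)]
  have key : ∫ δ in {δ : Fin m → ℝ | ∀ k, -1 ≤ δ k ∧ δ k ≤ 1}, δ i * δ j
      = ∏ k, ∫ t : ℝ, F k t := by
    rw [← integral_indicator hmeas]
    rw [show ({δ : Fin m → ℝ | ∀ k, -1 ≤ δ k ∧ δ k ≤ 1}.indicator (fun δ => δ i * δ j))
        = fun δ => ∏ k, F k (δ k) from funext hfun]
    exact MeasureTheory.integral_fintype_prod_eq_prod F
  rw [key]
  have hFk : ∀ k, ∫ t : ℝ, F k t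
      = if k = i then (if j = i then 2/3 else 0) else if k = j then 0 else 2 := by
    intro k
    rw [hF]
    simp only []
    rw [integral_indicator measurableSet_Icc]
    by_cases hki : k = i
    · by_cases hji : j = i
      · simp [hP, hki, hji, int1d_sq]
      · simp [hP, hki, hji, int1d_id]
    · by_cases hkj : k = j
      · have hji : ¬ j = i := fun h => hki (hkj.trans h)
        simp [hP, hki, hkj, hji, int1d_id]
      · simp [hP, hki, hkj, int1d_one]
        norm_num
  simp only [hFk]
  by_cases hij : i = j
  · subst hij
    simp only [eq_self_iff_true, if_true]
    have hred : ∀ k ∈ Finset.univ, (if k = i then (2:ℝ)/3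
        else if k = i then 0 else 2) = if k = i then 2/3 else 2 := by
      intro k _; by_cases h : k = i <;> simp [h]
    rw [Finset.prod_congr rfl hred,
      ← Finset.mul_prod_erase Finset.univ _ (Finset.mem_univ i), if_pos rfl,
      Finset.prod_congr rfl (fun k hk => if_neg (Finset.ne_of_mem_erase hk)),
      Finset.prod_const, Finset.card_erase_of_mem (Finset.mem_univ i), Finset.card_univ,
      Fintype.card_fin]
    have h2 : (2:ℝ)^m = 2 * 2^(m-1) := by
      conv_lhs => rw [show m = (m-1)+1 by omega]
      ring
    rw [h2]; ring
  · rw [if_neg hij]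
    refine Finset.prod_eq_zero (Finset.mem_univ j) ?_
    have hji : ¬ j = i := fun h => hij h.symm
    rw [if_neg hji, if_pos rfl]

lemma integrable_cube (m : ℕ) (h : (Fin m → ℝ) → ℝ) (hh : Continuous h) :
    Integrable h (((2 : ENNReal) ^ m)⁻¹ •
      volume.restrict {δ : Fin m → ℝ | ∀ i, -1 ≤ δ i ∧ δ i ≤ 1}) := by
  refine Integrable.smul_measure ?_ (by simp)
  rw [cube_eq_Icc]
  exact (hh.continuousOn).integrableOn_compact isCompact_Icc

lemma prob_cube (m : ℕ) :
    IsProbabilityMeasure (((2 : ENNReal) ^ m)⁻¹ •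
      volume.restrict {δ : Fin m → ℝ | ∀ i, -1 ≤ δ i ∧ δ i ≤ 1}) := by
  constructor
  rw [Measure.smul_apply, Measure.restrict_apply_univ, cube_eq_Icc, Real.volume_Icc_pi]
  have : ∀ _i : Fin m, ENNReal.ofReal ((1:ℝ) - (-1)) = 2 := fun _ => by
    norm_num
  rw [Finset.prod_congr rfl (fun k _ => this k), Finset.prod_const, Finset.card_univ,
    Fintype.card_fin, smul_eq_mul]
  exact ENNReal.inv_mul_cancel (by positivity) (by simp)

lemma momentμ (m : ℕ) (hm : 0 < m) (i j : Fin m) :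
    ∫ δ, δ i * δ j ∂(((2 : ENNReal) ^ m)⁻¹ •
      volume.restrict {δ : Fin m → ℝ | ∀ k, -1 ≤ δ k ∧ δ k ≤ 1}) =
      if i = j then (1:ℝ)/3 else 0 := by
  rw [integral_smul_measure, moment m hm i j]
  have ht : ((2 : ENNReal) ^ m)⁻¹.toReal = ((2:ℝ)^m)⁻¹ := by
    simp [ENNReal.toReal_inv]
  rw [ht]
  by_cases hij : i = j
  · simp only [hij, if_pos rfl, smul_eq_mul, if_true]
    field_simp
  · simp [hij]

set_option maxHeartbeats 2000000 in
/-- Theorem 4.3 (rigorous small-ε form): the ratio of adversarial to random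
vulnerability tends to `3‖g‖₁²/‖g‖₂²` as `ε → 0⁺`, a limit `L` satisfying
`3 ≤ L ≤ 3‖g‖₀`. -/
theorem adv_rand_vulnerability_ratio (m : ℕ) (hm : 0 < m)
    (μ : Measure (Fin m → ℝ))
    (hμ : μ = ((2 : ENNReal) ^ m)⁻¹ •
      volume.restrict {δ : Fin m → ℝ | ∀ i, -1 ≤ δ i ∧ δ i ≤ 1})
    (f : (Fin m → ℝ) → ℝ) (x g : Fin m → ℝ)
    (hf_cont : Continuous f)
    (L : (Fin m → ℝ) →L[ℝ] ℝ) (hf : HasFDerivAt f L x)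
    (hL : ∀ δ, L δ = ∑ i, g i * δ i)
    (hg : g ≠ 0) :
    Tendsto (fun ε : ℝ =>
        sSup {t : ℝ | ∃ δ : Fin m → ℝ, (∀ i, |δ i| ≤ 1) ∧
            t = (f (x + ε • δ) - f x) ^ 2} /
          (∫ δ, (f (x + ε • δ) - f x) ^ 2 ∂μ))
      (nhdsWithin 0 (Set.Ioi 0))
      (nhds (3 * (∑ i, |g i|) ^ 2 / ∑ i, (g i) ^ 2)) ∧
    3 ≤ 3 * (∑ i, |g i|) ^ 2 / ∑ i, (g i) ^ 2 ∧
    3 * (∑ i, |g i|) ^ 2 / ∑ i, (g i) ^ 2 ≤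
      3 * ((Finset.univ.filter (fun i => g i ≠ 0)).card : ℝ) := by
  classical
  subst hμ
  set μ : Measure (Fin m → ℝ) := ((2 : ENNReal) ^ m)⁻¹ •
      volume.restrict {δ : Fin m → ℝ | ∀ i, -1 ≤ δ i ∧ δ i ≤ 1} with hμdef
  haveI : IsProbabilityMeasure μ := prob_cube m
  set A : ℝ := ∑ i, |g i| with hAdef
  set B : ℝ := ∑ i, (g i)^2 with hBdef
  obtain ⟨i₀, hi₀⟩ : ∃ i, g i ≠ 0 := Function.ne_iff.mp hg
  have hA : 0 < A :=
    lt_of_lt_of_le (abs_pos.mpr hi₀)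
      (Finset.single_le_sum (f := fun i => |g i|) (fun i _ => abs_nonneg _)
        (Finset.mem_univ i₀))
  have hB : 0 < B := by
    have h1 : 0 < (g i₀)^2 := by positivity
    exact lt_of_lt_of_le h1
      (Finset.single_le_sum (f := fun i => (g i)^2) (fun i _ => sq_nonneg _)
        (Finset.mem_univ i₀))
  -- basic bound on L
  have hLbound : ∀ δ : Fin m → ℝ, (∀ i, |δ i| ≤ 1) → |L δ| ≤ A := by
    intro δ hδ
    rw [hL]
    refine (Finset.abs_sum_le_sum_abs _ _).trans ?_
    refine Finset.sum_le_sum fun i _ => ?_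
    rw [abs_mul]
    exact mul_le_of_le_one_right (abs_nonneg _) (hδ i)
  -- maximizer
  set δstar : Fin m → ℝ := fun i => if 0 ≤ g i then 1 else -1 with hδstardef
  have hδstar1 : ∀ i, |δstar i| ≤ 1 := by
    intro i; by_cases h : 0 ≤ g i <;> simp [hδstardef, h]
  have hLδstar : L δstar = A := by
    rw [hL]
    refine Finset.sum_congr rfl fun i _ => ?_
    by_cases h : 0 ≤ g i
    · simp [hδstardef, h, abs_of_nonneg h]
    · simp [hδstardef, h, abs_of_neg (lt_of_not_ge h)]
  -- key differentiability estimate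
  have hest : ∀ c : ℝ, 0 < c → ∃ r > 0, ∀ ε : ℝ, 0 < ε → ε < r →
      ∀ δ : Fin m → ℝ, (∀ i, |δ i| ≤ 1) →
        |f (x + ε • δ) - f x - ε * L δ| ≤ c * ε := by
    intro c hc
    have h1 := (hasFDerivAt_iff_isLittleO_nhds_zero.mp hf).def hc
    rw [Metric.eventually_nhds_iff] at h1
    obtain ⟨r, hr, h3⟩ := h1
    refine ⟨r, hr, fun ε hε hεr δ hδ => ?_⟩
    have hδn : ‖δ‖ ≤ 1 := by
      rw [pi_norm_le_iff_of_nonneg zero_le_one]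
      intro i; rw [Real.norm_eq_abs]; exact hδ i
    have hnv : ‖ε • δ‖ ≤ ε := by
      rw [norm_smul, Real.norm_eq_abs, abs_of_pos hε]
      calc ε * ‖δ‖ ≤ ε * 1 := by gcongr
        _ = ε := mul_one ε
    have hv : dist (ε • δ) 0 < r := by
      rw [dist_zero_right]; exact lt_of_le_of_lt hnv hεr
    have h4 := h3 hv
    rw [L.map_smul, smul_eq_mul, Real.norm_eq_abs] at h4
    calc |f (x + ε • δ) - f x - ε * L δ| ≤ c * ‖ε • δ‖ := h4
      _ ≤ c * ε := by gcongr
  -- N and D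
  set N : ℝ → ℝ := fun ε => sSup {t : ℝ | ∃ δ : Fin m → ℝ, (∀ i, |δ i| ≤ 1) ∧
      t = (f (x + ε • δ) - f x) ^ 2} with hNdef
  set D : ℝ → ℝ := fun ε => ∫ δ, (f (x + ε • δ) - f x) ^ 2 ∂μ with hDdef
  -- bounds on N
  have hNbounds : ∀ c : ℝ, 0 < c → c < A → ∃ r > 0, ∀ ε : ℝ, 0 < ε → ε < r →
      ((A - c) * ε)^2 ≤ N ε ∧ N ε ≤ ((A + c) * ε)^2 := by
    intro c hc hcA
    obtain ⟨r, hr, hest'⟩ := hest c hc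
    refine ⟨r, hr, fun ε hε hεr => ?_⟩
    have hub : ∀ t ∈ {t : ℝ | ∃ δ : Fin m → ℝ, (∀ i, |δ i| ≤ 1) ∧
        t = (f (x + ε • δ) - f x) ^ 2}, t ≤ ((A + c) * ε)^2 := by
      rintro t ⟨δ, hδ, rfl⟩
      have h1 := hest' ε hε hεr δ hδ
      have h2 : |f (x + ε • δ) - f x| ≤ (A + c) * ε := by
        have h3 : |f (x + ε • δ) - f x| ≤
            |f (x + ε • δ) - f x - ε * L δ| + |ε * L δ| := by
          calc |f (x + ε • δ) - f x|
              = |(f (x + ε • δ) - f x - ε * L δ) + ε * L δ| := by ring_nf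
            _ ≤ _ := abs_add_le _ _
        have h4 : |ε * L δ| ≤ ε * A := by
          rw [abs_mul, abs_of_pos hε]
          exact mul_le_mul_of_nonneg_left (hLbound δ hδ) hε.le
        calc |f (x + ε • δ) - f x| ≤ c * ε + ε * A := by linarith
          _ = (A + c) * ε := by ring
      calc (f (x + ε • δ) - f x)^2 = |f (x + ε • δ) - f x|^2 := (sq_abs _).symm
        _ ≤ ((A + c) * ε)^2 := by
            exact pow_le_pow_left₀ (abs_nonneg _) h2 2
    have hbdd : BddAbove {t : ℝ | ∃ δ : Fin m → ℝ, (∀ i, |δ i| ≤ 1) ∧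
        t = (f (x + ε • δ) - f x) ^ 2} := ⟨((A + c) * ε)^2, hub⟩
    constructor
    · -- lower bound via δstar
      have hmem : (f (x + ε • δstar) - f x)^2 ∈ {t : ℝ | ∃ δ : Fin m → ℝ,
          (∀ i, |δ i| ≤ 1) ∧ t = (f (x + ε • δ) - f x) ^ 2} := ⟨δstar, hδstar1, rfl⟩
      have h1 := hest' ε hε hεr δstar hδstar1
      rw [hLδstar] at h1
      have h2 : (A - c) * ε ≤ f (x + ε • δstar) - f x := by
        have := abs_le.mp h1
        nlinarith [this.1]
      have h3 : ((A - c) * ε)^2 ≤ (f (x + ε • δstar) - f x)^2 := by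
        have h0 : 0 ≤ (A - c) * ε := mul_nonneg (by linarith) hε.le
        nlinarith
      exact h3.trans (le_csSup hbdd hmem)
    · exact Real.sSup_le hub (by positivity)
  -- claim 1
  have claim1 : Tendsto (fun ε => N ε / ε^2) (nhdsWithin 0 (Set.Ioi 0)) (nhds (A^2)) := by
    rw [Metric.tendsto_nhdsWithin_nhds]
    intro η hη
    set c : ℝ := min (A/2) (η/(4*A)) with hcdef
    have hc : 0 < c := by positivity
    have hcA : c < A := lt_of_le_of_lt (min_le_left _ _) (by linarith)
    obtain ⟨r, hr, hb⟩ := hNbounds c hc hcA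
    refine ⟨r, hr, fun {ε} hεIoi hεd => ?_⟩
    rw [Real.dist_eq, sub_zero] at hεd
    have hε : 0 < ε := hεIoi
    rw [abs_of_pos hε] at hεd
    obtain ⟨hl, hu⟩ := hb ε hε hεd
    have hε2 : (0:ℝ) < ε^2 := by positivity
    have hl' : (A - c)^2 ≤ N ε / ε^2 := by
      rw [le_div_iff₀ hε2]; calc (A-c)^2 * ε^2 = ((A-c)*ε)^2 := by ring
        _ ≤ N ε := hl
    have hu' : N ε / ε^2 ≤ (A + c)^2 := by
      rw [div_le_iff₀ hε2]; calc N ε ≤ ((A+c)*ε)^2 := hu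
        _ = (A+c)^2 * ε^2 := by ring
    rw [Real.dist_eq]
    have hc1 : c ≤ A/2 := min_le_left _ _
    have hc2 : c ≤ η/(4*A) := min_le_right _ _
    have hAc : A * c ≤ η/4 := by
      have h := mul_le_mul_of_nonneg_left hc2 hA.le
      rwa [show A * (η/(4*A)) = η/4 by field_simp] at h
    have hcc0 : 0 ≤ c * c := by positivity
    have hccA : c * c ≤ A * c := by nlinarith
    have hexp1 : (A+c)^2 = A^2 + 2*(A*c) + c*c := by ring
    have hexp2 : (A-c)^2 = A^2 - 2*(A*c) + c*c := by ring
    rw [abs_lt]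
    constructor
    · linarith [hl']
    · linarith [hu']
  -- claim 2
  have hmeas : MeasurableSet {δ : Fin m → ℝ | ∀ i, -1 ≤ δ i ∧ δ i ≤ 1} := by
    rw [cube_eq_Icc]; exact measurableSet_Icc
  have hcont_aux : ∀ ε : ℝ, Continuous (fun δ : Fin m → ℝ => f (x + ε • δ) - f x) := by
    intro ε
    exact (hf_cont.comp (continuous_const.add (continuous_id.const_smul ε))).sub
      continuous_const
  have hintG : Integrable (fun δ => (L δ)^2) μ := by
    rw [hμdef]; exact integrable_cube m _ (L.continuous.pow 2)
  have hintH : ∀ ε : ℝ, Integrable (fun δ => (f (x + ε • δ) - f x)^2 / ε^2) μ := by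
    intro ε; rw [hμdef]; exact integrable_cube m _ (((hcont_aux ε).pow 2).div_const _)
  have hIμ : ∫ δ, (L δ)^2 ∂μ = B/3 := by
    have h1 : (fun δ : Fin m → ℝ => (L δ)^2)
        = fun δ => ∑ i, ∑ j, (g i * g j) * (δ i * δ j) := by
      funext δ; rw [hL, sq, Finset.sum_mul_sum]
      exact Finset.sum_congr rfl fun i _ => Finset.sum_congr rfl fun j _ => by ring
    have hint2 : ∀ i j : Fin m,
        Integrable (fun δ : Fin m → ℝ => (g i * g j) * (δ i * δ j)) μ := by
      intro i j; rw [hμdef]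
      exact integrable_cube m _
        (continuous_const.mul ((continuous_apply i).mul (continuous_apply j)))
    rw [h1, integral_finset_sum Finset.univ
      (fun i _ => integrable_finset_sum Finset.univ (fun j _ => hint2 i j))]
    have h2 : ∀ i : Fin m, ∫ δ, (∑ j, (g i * g j) * (δ i * δ j)) ∂μ
        = g i * g i * (1/3) := by
      intro i
      rw [integral_finset_sum Finset.univ (fun j _ => hint2 i j)]
      have h3 : ∀ j : Fin m, ∫ δ, (g i * g j) * (δ i * δ j) ∂μ
          = if i = j then g i * g j * (1/3) else 0 := by
        intro j
        rw [integral_const_mul, hμdef, momentμ m hm i j]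
        by_cases h : i = j <;> simp [h]
      simp_rw [h3]
      rw [Finset.sum_ite_eq Finset.univ i (fun j => g i * g j * (1/3))]
      simp
    rw [Finset.sum_congr rfl (fun i _ => h2 i), hBdef, Finset.sum_div]
    exact Finset.sum_congr rfl fun i _ => by rw [sq]; ring
  have claim2 : Tendsto (fun ε => D ε / ε^2) (nhdsWithin 0 (Set.Ioi 0)) (nhds (B/3)) := by
    rw [Metric.tendsto_nhdsWithin_nhds]
    intro η hη
    set c : ℝ := min A (η/(6*A)) with hcdef
    have hc : 0 < c := by positivity
    have hcA : c ≤ A := min_le_left _ _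
    have hc2 : c ≤ η/(6*A) := min_le_right _ _
    obtain ⟨r, hr, hest'⟩ := hest c hc
    refine ⟨r, hr, fun {ε} hεIoi hεd => ?_⟩
    rw [Real.dist_eq, sub_zero] at hεd
    have hε : (0:ℝ) < ε := hεIoi
    rw [abs_of_pos hε] at hεd
    have hDdiv : D ε / ε^2 = ∫ δ, (f (x + ε • δ) - f x)^2/ε^2 ∂μ := by
      rw [hDdef]; exact (integral_div _ _).symm
    have hkey : |(∫ δ, (f (x + ε • δ) - f x)^2/ε^2 ∂μ) - ∫ δ, (L δ)^2 ∂μ|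
        ≤ c * (2*A + c) := by
      rw [← integral_sub (hintH ε) hintG]
      have hbd : ∀ᵐ δ ∂μ, ‖(f (x + ε • δ) - f x)^2/ε^2 - (L δ)^2‖ ≤ c * (2*A + c) := by
        rw [hμdef]
        refine Measure.ae_smul_measure ?_ _
        filter_upwards [ae_restrict_mem hmeas] with δ hδmem
        have hδ : ∀ i, |δ i| ≤ 1 := fun i => abs_le.mpr ⟨(hδmem i).1, (hδmem i).2⟩
        have h1 := hest' ε hε hεd δ hδ
        have hLb := hLbound δ hδ
        have hq1 : |(f (x + ε • δ) - f x)/ε - L δ| ≤ c := by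
          rw [show (f (x + ε • δ) - f x)/ε - L δ
              = (f (x + ε • δ) - f x - ε * L δ)/ε by field_simp,
            abs_div, abs_of_pos hε, div_le_iff₀ hε]
          exact h1
        have hq0 : |(f (x + ε • δ) - f x)/ε| ≤ A + c := by
          calc |(f (x + ε • δ) - f x)/ε|
              = |((f (x + ε • δ) - f x)/ε - L δ) + L δ| := by ring_nf
            _ ≤ |(f (x + ε • δ) - f x)/ε - L δ| + |L δ| := abs_add_le _ _
            _ ≤ c + A := add_le_add hq1 hLb
            _ = A + c := by ring
        have hq2 : |(f (x + ε • δ) - f x)/ε + L δ| ≤ 2*A + c := by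
          calc |(f (x + ε • δ) - f x)/ε + L δ|
              ≤ |(f (x + ε • δ) - f x)/ε| + |L δ| := abs_add_le _ _
            _ ≤ (A + c) + A := add_le_add hq0 hLb
            _ = 2*A + c := by ring
        have heq : (f (x + ε • δ) - f x)^2/ε^2 - (L δ)^2
            = ((f (x + ε • δ) - f x)/ε - L δ) * ((f (x + ε • δ) - f x)/ε + L δ) := by
          field_simp; ring
        rw [Real.norm_eq_abs, heq, abs_mul]
        exact mul_le_mul hq1 hq2 (abs_nonneg _) hc.le
      have h5 := norm_integral_le_of_norm_le_const hbd
      rw [Real.norm_eq_abs] at h5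
      have h6 : μ.real Set.univ = 1 := by simp
      rw [h6, mul_one] at h5
      exact h5
    rw [Real.dist_eq, hDdiv, ← hIμ]
    have hAc : A * c ≤ η/6 := by
      have h := mul_le_mul_of_nonneg_left hc2 hA.le
      rwa [show A * (η/(6*A)) = η/6 by field_simp] at h
    have hcc : c * c ≤ A * c := by nlinarith
    have hexp : c * (2*A + c) = 2*(A*c) + c*c := by ring
    calc |(∫ δ, (f (x + ε • δ) - f x)^2/ε^2 ∂μ) - ∫ δ, (L δ)^2 ∂μ|
        ≤ c * (2*A + c) := hkey
      _ < η := by linarith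
  -- assembly
  refine ⟨?_, ?_, ?_⟩
  · have hB3 : B/3 ≠ 0 := by positivity
    have htendsto := claim1.div claim2 hB3
    have hlim : A^2 / (B/3) = 3 * A^2 / B := by
      rw [div_div_eq_mul_div]; ring
    rw [hlim] at htendsto
    have hmain : Tendsto (fun ε => N ε / D ε) (nhdsWithin 0 (Set.Ioi 0))
        (nhds (3 * A^2 / B)) := by
      refine Tendsto.congr' ?_ htendsto
      filter_upwards [self_mem_nhdsWithin] with ε hε
      have hεne : (ε:ℝ) ≠ 0 := ne_of_gt hε
      rcases eq_or_ne (D ε) 0 with h | h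
      · simp [h]
      · simp only [Pi.div_apply]; field_simp
    simpa only [hNdef, hDdef] using hmain
  · rw [le_div_iff₀ hB]
    have hBA : B ≤ A^2 := by
      rw [hAdef, hBdef]
      calc ∑ i, (g i)^2 = ∑ i, |g i|^2 := by simp [sq_abs]
        _ ≤ (∑ i, |g i|)^2 :=
            Finset.sum_sq_le_sq_sum_of_nonneg (fun i _ => abs_nonneg _)
    linarith
  · rw [div_le_iff₀ hB]
    have h1 : A = ∑ i ∈ Finset.univ.filter (fun i => g i ≠ 0), |g i| := by
      rw [hAdef]
      refine (Finset.sum_subset (Finset.filter_subset _ _) ?_).symm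
      intro i _ hni
      have hgi : g i = 0 := by
        by_contra hc
        exact hni (Finset.mem_filter.mpr ⟨Finset.mem_univ _, hc⟩)
      simp [hgi]
    have h2 := Finset.sum_mul_sq_le_sq_mul_sq
      (Finset.univ.filter (fun i => g i ≠ 0)) (fun _ => (1:ℝ)) (fun i => |g i|)
    simp only [one_mul, one_pow] at h2
    have h3 : ∑ i ∈ Finset.univ.filter (fun i => g i ≠ 0), |g i|^2 ≤ B := by
      rw [hBdef]
      calc ∑ i ∈ Finset.univ.filter (fun i => g i ≠ 0), |g i|^2
          = ∑ i ∈ Finset.univ.filter (fun i => g i ≠ 0), (g i)^2 := by simp [sq_abs]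
        _ ≤ ∑ i, (g i)^2 := Finset.sum_le_sum_of_subset_of_nonneg
            (Finset.filter_subset _ _) (fun i _ _ => sq_nonneg _)
    have h4 : (∑ _i ∈ Finset.univ.filter (fun i => g i ≠ 0), (1:ℝ))
        = ((Finset.univ.filter (fun i => g i ≠ 0)).card : ℝ) := by simp
    have hcard : (0:ℝ) ≤ ((Finset.univ.filter (fun i => g i ≠ 0)).card : ℝ) :=
      Nat.cast_nonneg _
    rw [h1]
    nlinarith [h2, h3]
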